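/- Let r ∈ int(D_d) be reduced. Then r ∈ D_d^{(0)} (i.e., for every z ∈ ℤ^d there is n with τ_r^n(z) = 0) if and only if 0 ∈ T_r(0) and 0 ∉ T_r(y) for all y ∈ ℤ^d, y ≠ 0. -/
import Mathlib


open Matrix Filter

noncomputable section

/-- Scalar product r·z of a real vector with an integer vector. -/
def srsDot {d : ℕ} (r : Fin d → ℝ) (z : Fin d → ℤ) : ℝ := ∑ i, r i * (z i : ℝ)

/-- The shift radix map τ_r(z) = (z_1,...,z_{d-1}, -⌊r·z⌋). -/
def srsTau {d : ℕ} (r : Fin d → ℝ) (z : Fin d → ℤ) : Fin d → ℤ :=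
  fun i => if h : (i : ℕ) + 1 < d then z ⟨(i : ℕ) + 1, h⟩ else -⌊srsDot r z⌋

/-- The companion matrix M_r of r. -/
def companion {d : ℕ} (r : Fin d → ℝ) : Matrix (Fin d) (Fin d) ℝ :=
  fun i j => if (i : ℕ) + 1 < d then (if (j : ℕ) = (i : ℕ) + 1 then 1 else 0) else -r j

/-- The vector (0,...,0,v)^t. -/
def digitVec {d : ℕ} (v : ℝ) : Fin d → ℝ := fun i => if (i : ℕ) + 1 = d then v else 0

/-- Coordinatewise cast of an integer vector to a real vector. -/
def intToReal {d : ℕ} (z : Fin d → ℤ) : Fin d → ℝ := fun i => (z i : ℝ)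

/-- M_r is contractive (spectral radius < 1). -/
def srsContractive {d : ℕ} (r : Fin d → ℝ) : Prop :=
  ∃ C > (0:ℝ), ∃ ρ : ℝ, 0 ≤ ρ ∧ ρ < 1 ∧
    ∀ (n : ℕ) (x : Fin d → ℝ), ‖((companion r) ^ n).mulVec x‖ ≤ C * ρ ^ n * ‖x‖

/-- The SRS tile T_r(x), as the set of limit points lim M_r^n z_{-n} with
τ_r^n(z_{-n}) = x. -/
def srsTile {d : ℕ} (r : Fin d → ℝ) (x : Fin d → ℤ) : Set (Fin d → ℝ) :=
  {t | ∃ z : ℕ → (Fin d → ℤ), (∀ n, (srsTau r)^[n] (z n) = x) ∧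
    Tendsto (fun n => ((companion r) ^ n).mulVec (intToReal (z n))) atTop (nhds t)}

lemma srsTau_zero {d : ℕ} (r : Fin d → ℝ) : srsTau r 0 = 0 := by
  funext i
  simp [srsTau, srsDot]

lemma srsTau_iterate_zero {d : ℕ} (r : Fin d → ℝ) (n : ℕ) : (srsTau r)^[n] (0 : Fin d → ℤ) = 0 := by
  induction n with
  | zero => rfl
  | succ n ih => rw [Function.iterate_succ_apply, srsTau_zero, ih]

lemma key_identity {d : ℕ} (r : Fin d → ℝ) (z : Fin d → ℤ) :
    intToReal (srsTau r z) = (companion r).mulVec (intToReal z) + digitVec (Int.fract (srsDot r z)) := by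
  funext i
  by_cases h : (i : ℕ) + 1 < d
  · have hd : (i : ℕ) + 1 ≠ d := Nat.ne_of_lt h
    have hsum : (companion r).mulVec (intToReal z) i = (z ⟨(i:ℕ)+1, h⟩ : ℝ) := by
      simp only [Matrix.mulVec, dotProduct, companion, if_pos h]
      rw [Finset.sum_eq_single (⟨(i:ℕ)+1, h⟩ : Fin d)]
      · simp [intToReal]
      · intro b _ hb
        rw [if_neg, zero_mul]
        intro hb'
        exact hb (Fin.ext hb')
      · simp
    simp [intToReal, srsTau, h, Pi.add_apply, digitVec, hd, hsum]
  · have hd : (i : ℕ) + 1 = d := by omega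
    have hsum : (companion r).mulVec (intToReal z) i = -srsDot r z := by
      simp only [Matrix.mulVec, dotProduct, companion, if_neg h, srsDot, intToReal]
      rw [← Finset.sum_neg_distrib]
      exact Finset.sum_congr rfl (fun j _ => by ring)
    simp only [intToReal, srsTau, dif_neg h, Pi.add_apply, digitVec, if_pos hd, hsum, Int.fract]
    push_cast
    ring

lemma digitVec_norm_le {d : ℕ} (v : ℝ) (hv : |v| ≤ 1) : ‖(digitVec v : Fin d → ℝ)‖ ≤ 1 := by
  rw [pi_norm_le_iff_of_nonneg zero_le_one]
  intro i
  simp only [digitVec]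
  split
  · rwa [Real.norm_eq_abs]
  · simp

lemma iterate_decomp {d : ℕ} (r : Fin d → ℝ) {C ρ : ℝ} (hC : 0 < C) (hρ0 : 0 ≤ ρ) (hρ1 : ρ < 1)
    (hb : ∀ (n : ℕ) (x : Fin d → ℝ), ‖((companion r) ^ n).mulVec x‖ ≤ C * ρ ^ n * ‖x‖)
    (n : ℕ) (z : Fin d → ℤ) :
    ∃ e : Fin d → ℝ, intToReal ((srsTau r)^[n] z) = ((companion r) ^ n).mulVec (intToReal z) + e
      ∧ ‖e‖ ≤ C * (1 - ρ)⁻¹ := by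
  have hgeom : ∀ n : ℕ, C * ∑ j ∈ Finset.range n, ρ ^ j ≤ C * (1 - ρ)⁻¹ := by
    intro n
    apply mul_le_mul_of_nonneg_left _ hC.le
    calc ∑ j ∈ Finset.range n, ρ ^ j ≤ ∑' j : ℕ, ρ ^ j :=
          Summable.sum_le_tsum _ (fun i _ => by positivity) (summable_geometric_of_lt_one hρ0 hρ1)
      _ = (1 - ρ)⁻¹ := tsum_geometric_of_lt_one hρ0 hρ1
  suffices H : ∀ n z, ∃ e : Fin d → ℝ,
      intToReal ((srsTau r)^[n] z) = ((companion r) ^ n).mulVec (intToReal z) + e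
      ∧ ‖e‖ ≤ C * ∑ j ∈ Finset.range n, ρ ^ j by
    obtain ⟨e, he1, he2⟩ := H n z
    exact ⟨e, he1, he2.trans (hgeom n)⟩
  intro n
  induction n with
  | zero =>
    intro z
    refine ⟨0, by simp [Matrix.one_mulVec], by simp⟩
  | succ n ih =>
    intro z
    obtain ⟨e, he1, he2⟩ := ih (srsTau r z)
    refine ⟨((companion r) ^ n).mulVec (digitVec (Int.fract (srsDot r z))) + e, ?_, ?_⟩
    · rw [Function.iterate_succ_apply, he1, key_identity, Matrix.mulVec_add, pow_succ,
        ← Matrix.mulVec_mulVec]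
      abel
    · calc ‖((companion r) ^ n).mulVec (digitVec (Int.fract (srsDot r z))) + e‖
          ≤ ‖((companion r) ^ n).mulVec (digitVec (Int.fract (srsDot r z)))‖ + ‖e‖ := norm_add_le _ _
        _ ≤ C * ρ ^ n * 1 + C * ∑ j ∈ Finset.range n, ρ ^ j := by
            apply add_le_add _ he2
            calc ‖((companion r) ^ n).mulVec (digitVec (Int.fract (srsDot r z)))‖
                ≤ C * ρ ^ n * ‖(digitVec (Int.fract (srsDot r z)) : Fin d → ℝ)‖ := hb n _
              _ ≤ C * ρ ^ n * 1 := by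
                  apply mul_le_mul_of_nonneg_left (digitVec_norm_le _ ?_)
                  · positivity
                  · rw [abs_of_nonneg (Int.fract_nonneg _)]
                    exact (Int.fract_lt_one _).le
        _ ≤ C * ∑ j ∈ Finset.range (n+1), ρ ^ j := by
            rw [Finset.sum_range_succ, mul_add]
            linarith

lemma ball_finite {d : ℕ} (B : ℝ) : {w : Fin d → ℤ | ‖intToReal w‖ ≤ B}.Finite := by
  apply Set.Finite.subset (Set.finite_Icc (fun _ => (-⌈B⌉ : ℤ)) (fun _ => ⌈B⌉))
  intro w hw
  simp only [Set.mem_Icc, Pi.le_def]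
  constructor <;> intro i <;>
  · have h1 : |(w i : ℝ)| ≤ B := by
      have := norm_le_pi_norm (intToReal w) i
      simp only [intToReal, Real.norm_eq_abs] at this
      exact this.trans hw
    have h2 : |(w i : ℝ)| ≤ (⌈B⌉ : ℝ) := h1.trans (Int.le_ceil B)
    rw [← Int.cast_abs, Int.cast_le, abs_le] at h2
    omega

lemma iterate_periodic {d : ℕ} (r : Fin d → ℝ) {p : ℕ} {y : Fin d → ℤ}
    (hp : (srsTau r)^[p] y = y) (t : ℕ) : (srsTau r)^[p * t] y = y := by
  induction t with
  | zero => simp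
  | succ t ih => rw [Nat.mul_succ, Function.iterate_add_apply, hp, ih]

lemma periodic_mem_tile {d : ℕ} (r : Fin d → ℝ) {C ρ : ℝ} (hC : 0 < C) (hρ0 : 0 ≤ ρ) (hρ1 : ρ < 1)
    (hb : ∀ (n : ℕ) (x : Fin d → ℝ), ‖((companion r) ^ n).mulVec x‖ ≤ C * ρ ^ n * ‖x‖)
    {p : ℕ} (hp0 : 0 < p) {y : Fin d → ℤ} (hp : (srsTau r)^[p] y = y) :
    (0 : Fin d → ℝ) ∈ srsTile r y := by
  set z : ℕ → (Fin d → ℤ) := fun k => (srsTau r)^[(p - k % p) % p] y with hz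
  have hmlt : ∀ k, (p - k % p) % p < p := fun k => Nat.mod_lt _ hp0
  have hdvd : ∀ k, p ∣ k + (p - k % p) % p := by
    intro k
    obtain ⟨q, s, h2, hmd, hq⟩ : ∃ q s, q < p ∧ q + p * s = k ∧ q = k % p :=
      ⟨k % p, k / p, Nat.mod_lt _ hp0, Nat.mod_add_div k p, rfl⟩
    rw [← hq]
    rcases Nat.eq_zero_or_pos q with h | h
    · rw [h, Nat.sub_zero, Nat.mod_self]
      exact ⟨s, by omega⟩
    · have hlt : p - q < p := by omega
      have he : p - q + q = p := Nat.sub_add_cancel h2.le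
      rw [Nat.mod_eq_of_lt hlt]
      exact ⟨s + 1, by rw [Nat.mul_succ]; omega⟩
  refine ⟨z, ?_, ?_⟩
  · intro k
    obtain ⟨t, ht⟩ := hdvd k
    have : (srsTau r)^[k] (z k) = (srsTau r)^[k + (p - k % p) % p] y := by
      rw [Function.iterate_add_apply]
    rw [this, ht, iterate_periodic r hp]
  · set R : ℝ := (Finset.range p).sup' (Finset.nonempty_range_iff.mpr hp0.ne') 
      (fun j => ‖intToReal ((srsTau r)^[j] y)‖) with hR
    have hzR : ∀ k, ‖intToReal (z k)‖ ≤ R := by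
      intro k
      exact Finset.le_sup' (fun j => ‖intToReal ((srsTau r)^[j] y)‖) (Finset.mem_range.mpr (hmlt k))
    rw [tendsto_zero_iff_norm_tendsto_zero]
    apply squeeze_zero (fun n => norm_nonneg _) (fun n => (hb n (intToReal (z n))).trans ?_)
      (f := fun n => ‖((companion r) ^ n).mulVec (intToReal (z n))‖)
      (g := fun n => C * ρ ^ n * R)
    · have : Tendsto (fun n : ℕ => C * ρ ^ n * R) atTop (nhds (C * 0 * R)) :=
        (((tendsto_pow_atTop_nhds_zero_of_lt_one hρ0 hρ1).const_mul C).mul_const R)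
      simpa using this
    · exact mul_le_mul_of_nonneg_left (hzR n) (by positivity)

lemma companion_mulVec_injective {d : ℕ} (hd : 0 < d) (r : Fin d → ℝ) (hr0 : r ⟨0, hd⟩ ≠ 0) :
    Function.Injective ((companion r).mulVecLin) := by
  rw [← LinearMap.ker_eq_bot, LinearMap.ker_eq_bot']
  intro x hx
  have hx' : ∀ i, (companion r).mulVec x i = 0 := fun i => congrFun hx i
  -- first: all coords with index ≥ 1 vanish
  have h1 : ∀ j : Fin d, (j : ℕ) ≠ 0 → x j = 0 := by
    intro j hj
    obtain ⟨i, hi⟩ : ∃ i : Fin d, (i : ℕ) + 1 = (j : ℕ) := by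
      refine ⟨⟨(j : ℕ) - 1, by omega⟩, by simp; omega⟩
    have hilt : (i : ℕ) + 1 < d := by rw [hi]; exact j.isLt
    have := hx' i
    rw [Matrix.mulVec, dotProduct] at this
    simp only [companion, if_pos hilt] at this
    rw [Finset.sum_eq_single j] at this
    · rw [if_pos hi.symm, one_mul] at this
      exact this
    · intro b _ hb
      rw [if_neg, zero_mul]
      intro hb'
      exact hb (Fin.ext (by omega))
    · simp
  -- last row gives x 0 = 0
  have hlast : x ⟨0, hd⟩ = 0 := by
    have hlt : ¬ ((⟨d - 1, by omega⟩ : Fin d) : ℕ) + 1 < d := by simp; omega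
    have := hx' ⟨d - 1, by omega⟩
    rw [Matrix.mulVec, dotProduct] at this
    simp only [companion, if_neg hlt] at this
    rw [Finset.sum_eq_single (⟨0, hd⟩ : Fin d)] at this
    · rcases mul_eq_zero.mp this with h | h
      · exact absurd (neg_eq_zero.mp h) hr0
      · exact h
    · intro b _ hb
      have hb0 : (b : ℕ) ≠ 0 := fun h => hb (Fin.ext (by simp [h]))
      rw [h1 b hb0, mul_zero]
    · simp
  funext j
  by_cases hj : (j : ℕ) = 0
  · have : j = ⟨0, hd⟩ := Fin.ext hj
    rw [this, hlast]; rfl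
  · rw [h1 j hj]; rfl

lemma shifted_tendsto {d : ℕ} (hd : 0 < d) (r : Fin d → ℝ) (hr0 : r ⟨0, hd⟩ ≠ 0)
    (z : ℕ → (Fin d → ℤ))
    (hten : Tendsto (fun n => ((companion r) ^ n).mulVec (intToReal (z n))) atTop (nhds 0))
    (k : ℕ) :
    Tendsto (fun n => ((companion r) ^ (n - k)).mulVec (intToReal (z n))) atTop (nhds 0) := by
  induction k with
  | zero => simpa using hten
  | succ k ih =>
    have hinj := companion_mulVec_injective hd r hr0
    have hsurj : Function.Surjective ((companion r).mulVecLin) :=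
      (LinearMap.injective_iff_surjective).mp hinj
    set e : (Fin d → ℝ) ≃ₗ[ℝ] (Fin d → ℝ) :=
      LinearEquiv.ofBijective (companion r).mulVecLin ⟨hinj, hsurj⟩ with he
    have hc : Continuous e.symm := (e.symm : (Fin d → ℝ) →ₗ[ℝ] (Fin d → ℝ)).continuous_of_finiteDimensional
    have h0 : e.symm 0 = 0 := map_zero _
    have htend2 : Tendsto (fun n => e.symm (((companion r) ^ (n - k)).mulVec (intToReal (z n))))
        atTop (nhds 0) := by
      rw [← h0]
      exact (hc.tendsto 0).comp ih
    apply htend2.congr'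
    filter_upwards [eventually_ge_atTop (k + 1)] with n hn
    have harr : (companion r) * (companion r) ^ (n - (k+1)) = (companion r) ^ (n - k) := by
      rw [← pow_succ']
      congr 1
      omega
    apply hinj
    show (companion r).mulVec _ = (companion r).mulVec _
    rw [Matrix.mulVec_mulVec, harr]
    have : e (e.symm (((companion r) ^ (n - k)).mulVec (intToReal (z n)))) = 
        ((companion r) ^ (n - k)).mulVec (intToReal (z n)) := e.apply_symm_apply _
    exact this

lemma mem_tile_periodic {d : ℕ} (hd : 0 < d) (r : Fin d → ℝ) (hr0 : r ⟨0, hd⟩ ≠ 0)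
    {C ρ : ℝ} (hC : 0 < C) (hρ0 : 0 ≤ ρ) (hρ1 : ρ < 1)
    (hb : ∀ (n : ℕ) (x : Fin d → ℝ), ‖((companion r) ^ n).mulVec x‖ ≤ C * ρ ^ n * ‖x‖)
    {y : Fin d → ℤ} (hy : (0 : Fin d → ℝ) ∈ srsTile r y) :
    ∃ p : ℕ, 0 < p ∧ (srsTau r)^[p] y = y := by
  obtain ⟨z, hz, hten⟩ := hy
  set B : ℝ := 1 + C * (1 - ρ)⁻¹ with hB
  set S : Finset (Fin d → ℤ) := (ball_finite (d := d) B).toFinset with hS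
  set K : ℕ := S.card with hK
  have hball : ∀ᶠ x : (Fin d → ℝ) in nhds 0, ‖x‖ < 1 := by
    filter_upwards [Metric.ball_mem_nhds (0 : Fin d → ℝ) one_pos] with x hx
    simpa [mem_ball_zero_iff] using hx
  have hall : ∀ᶠ n in atTop, ∀ k ∈ Finset.range (K + 1),
      ‖((companion r) ^ (n - k)).mulVec (intToReal (z n))‖ < 1 := by
    rw [Filter.eventually_all_finset]
    exact fun k _ => (shifted_tendsto hd r hr0 z hten k).eventually hball
  obtain ⟨n, hn1, hnK⟩ := (hall.and (eventually_ge_atTop K)).exists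
  -- the points τ^[n-k] (z n) for k ≤ K all lie in S
  have hmem : ∀ k : Fin (K + 1), (srsTau r)^[n - (k : ℕ)] (z n) ∈ S := by
    intro k
    obtain ⟨e, he1, he2⟩ := iterate_decomp r hC hρ0 hρ1 hb (n - (k : ℕ)) (z n)
    have hk : (k : ℕ) ∈ Finset.range (K + 1) := Finset.mem_range.mpr k.isLt
    have : ‖intToReal ((srsTau r)^[n - (k : ℕ)] (z n))‖ ≤ B := by
      rw [he1]
      calc ‖((companion r) ^ (n - (k:ℕ))).mulVec (intToReal (z n)) + e‖
          ≤ ‖((companion r) ^ (n - (k:ℕ))).mulVec (intToReal (z n))‖ + ‖e‖ := norm_add_le _ _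
        _ ≤ 1 + C * (1 - ρ)⁻¹ := add_le_add (hn1 _ hk).le he2
    rw [hS, Set.Finite.mem_toFinset]
    exact this
  obtain ⟨a, _, b, _, hab, heq⟩ :=
    Finset.exists_ne_map_eq_of_card_lt_of_maps_to
      (s := (Finset.univ : Finset (Fin (K + 1)))) (t := S)
      (by simp [hK]) (fun a _ => hmem a)
  -- wlog a < b
  wlog hlt : (a : ℕ) < (b : ℕ) generalizing a b
  · have hne : (a : ℕ) ≠ (b : ℕ) := fun h => hab (Fin.ext h)
    exact this b (Finset.mem_univ b) a (Finset.mem_univ a) hab.symm heq.symm (by omega)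
  set i := (a : ℕ)
  set j := (b : ℕ)
  have hjn : j ≤ n := le_trans (by omega) hnK
  set p := j - i with hp
  have hp0 : 0 < p := by omega
  obtain ⟨w, hw⟩ : ∃ w, w = (srsTau r)^[n - j] (z n) := ⟨_, rfl⟩
  have hpw : (srsTau r)^[p] w = w := by
    have h1 : (srsTau r)^[p] w = (srsTau r)^[n - i] (z n) := by
      rw [hw, ← Function.iterate_add_apply]
      congr 1
      omega
    rw [h1, heq, ← hw]
  have hyw : (srsTau r)^[j] w = y := by
    rw [hw, ← Function.iterate_add_apply]
    have : j + (n - j) = n := by omega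
    rw [this, hz n]
  refine ⟨p, hp0, ?_⟩
  calc (srsTau r)^[p] y = (srsTau r)^[p] ((srsTau r)^[j] w) := by rw [hyw]
    _ = (srsTau r)^[j] ((srsTau r)^[p] w) := by
        rw [← Function.iterate_add_apply, ← Function.iterate_add_apply, Nat.add_comm]
    _ = y := by rw [hpw, hyw]


/-- r has the finiteness property iff 0 lies in the central tile
and in no other tile. -/
theorem finiteness_iff_zero_exclusive (d : ℕ) (hd : 0 < d) (r : Fin d → ℝ)
    (hr0 : r ⟨0, hd⟩ ≠ 0) (hcontr : srsContractive r) :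
    (∀ z : Fin d → ℤ, ∃ n : ℕ, (srsTau r)^[n] z = 0) ↔
      ((0 : Fin d → ℝ) ∈ srsTile r 0 ∧
        ∀ y : Fin d → ℤ, y ≠ 0 → (0 : Fin d → ℝ) ∉ srsTile r y) := by
  obtain ⟨C, hC, ρ, hρ0, hρ1, hb⟩ := hcontr
  constructor
  · intro hfin
    refine ⟨periodic_mem_tile r hC hρ0 hρ1 hb one_pos (by simp [srsTau_zero]), ?_⟩
    intro y hy h0
    obtain ⟨p, hp0, hp⟩ := mem_tile_periodic hd r hr0 hC hρ0 hρ1 hb h0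
    obtain ⟨m, hm⟩ := hfin y
    apply hy
    have h1 : (srsTau r)^[p * m] y = y := iterate_periodic r hp m
    rcases Nat.eq_zero_or_pos m with hm0 | hm0
    · rw [hm0] at hm; exact hm
    · have hle : m ≤ p * m := Nat.le_mul_of_pos_left m hp0
      have h2 : (srsTau r)^[p * m] y = 0 := by
        have he : p * m = (p * m - m) + m := by omega
        rw [he, Function.iterate_add_apply, hm, srsTau_iterate_zero]
      rw [← h1, h2]
  · rintro ⟨-, hexc⟩ z
    set B : ℝ := 1 + C * (1 - ρ)⁻¹ with hB
    set S : Finset (Fin d → ℤ) := (ball_finite (d := d) B).toFinset with hS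
    set K : ℕ := S.card with hK
    -- the orbit is eventually inside the ball of radius B
    have htend : Tendsto (fun n : ℕ => C * ρ ^ n * ‖intToReal z‖) atTop (nhds 0) := by
      have : Tendsto (fun n : ℕ => C * ρ ^ n * ‖intToReal z‖) atTop
          (nhds (C * 0 * ‖intToReal z‖)) :=
        ((tendsto_pow_atTop_nhds_zero_of_lt_one hρ0 hρ1).const_mul C).mul_const _
      simpa using this
    have hev : ∀ᶠ n in atTop, C * ρ ^ n * ‖intToReal z‖ < 1 := by
      have hball : ∀ᶠ x : ℝ in nhds 0, x < 1 := by
        filter_upwards [Metric.ball_mem_nhds (0 : ℝ) one_pos] with x hx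
        have := abs_lt.mp (by simpa [Real.dist_eq] using hx)
        exact this.2
      exact htend.eventually hball
    obtain ⟨N, hN⟩ := eventually_atTop.mp hev
    have hmem : ∀ k : Fin (K + 1), (srsTau r)^[N + (k : ℕ)] z ∈ S := by
      intro k
      obtain ⟨e, he1, he2⟩ := iterate_decomp r hC hρ0 hρ1 hb (N + (k : ℕ)) z
      have hnorm : ‖intToReal ((srsTau r)^[N + (k : ℕ)] z)‖ ≤ B := by
        rw [he1]
        calc ‖((companion r) ^ (N + (k:ℕ))).mulVec (intToReal z) + e‖
            ≤ ‖((companion r) ^ (N + (k:ℕ))).mulVec (intToReal z)‖ + ‖e‖ := norm_add_le _ _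
          _ ≤ 1 + C * (1 - ρ)⁻¹ := by
              refine add_le_add ?_ he2
              refine (hb _ _).trans ?_
              exact (hN _ (Nat.le_add_right N _)).le
      rw [hS, Set.Finite.mem_toFinset]
      exact hnorm
    obtain ⟨a, -, b, -, hab, heq⟩ :=
      Finset.exists_ne_map_eq_of_card_lt_of_maps_to
        (s := (Finset.univ : Finset (Fin (K + 1)))) (t := S)
        (by simp [hK]) (fun a _ => hmem a)
    wlog hlt : (a : ℕ) < (b : ℕ) generalizing a b
    · have hne : (a : ℕ) ≠ (b : ℕ) := fun h => hab (Fin.ext h)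
      exact this b a hab.symm heq.symm (by omega)
    obtain ⟨y, hy⟩ : ∃ y, y = (srsTau r)^[N + (a : ℕ)] z := ⟨_, rfl⟩
    set p := (b : ℕ) - (a : ℕ) with hp
    have hp0 : 0 < p := by omega
    have hpy : (srsTau r)^[p] y = y := by
      rw [hy, ← Function.iterate_add_apply]
      have he : p + (N + (a : ℕ)) = N + (b : ℕ) := by omega
      rw [he, ← heq, ← hy]
    have hmemtile : (0 : Fin d → ℝ) ∈ srsTile r y :=
      periodic_mem_tile r hC hρ0 hρ1 hb hp0 hpy
    have hy0 : y = 0 := by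
      by_contra h
      exact hexc y h hmemtile
    exact ⟨N + (a : ℕ), hy ▸ hy0⟩
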